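/- In the category of monoids in a monoidal category (M, ⊗, I), the forgetful functor to M creates reflexive coequalizers: if a reflexive pair of monoid homomorphisms has a coequalizer in M that is preserved by tensoring (which holds when ⊗ preserves reflexive coequalizers in each variable), then that coequalizer carries a unique monoid structure making it the coequalizer in the category of monoids. -/

import Mathlib

open CategoryTheory CategoryTheory.Limits CategoryTheory.MonoidalCategory
open scoped CategoryTheory.MonObj

section Aux

variable {M : Type*} [Category M] [MonoidalCategory M]

/-- Whiskering a colimit cofork on the left. -/
noncomputable def stmt8AuxWhiskerLeft {A B Q : M} {f g : A ⟶ B} {π : B ⟶ Q} {w : f ≫ π = g ≫ π}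
    (t : IsColimit (Cofork.ofπ π w)) (X : M)
    [PreservesColimit (parallelPair f g) (tensorLeft X)] :
    IsColimit (Cofork.ofπ (X ◁ π)
      (show (X ◁ f) ≫ (X ◁ π) = (X ◁ g) ≫ (X ◁ π) by
        rw [← MonoidalCategory.whiskerLeft_comp, w, MonoidalCategory.whiskerLeft_comp])) :=
  isColimitCoforkMapOfIsColimit (tensorLeft X) w t

/-- Whiskering a colimit cofork on the right. -/
noncomputable def stmt8AuxWhiskerRight {A B Q : M} {f g : A ⟶ B} {π : B ⟶ Q} {w : f ≫ π = g ≫ π}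
    (t : IsColimit (Cofork.ofπ π w)) (X : M)
    [PreservesColimit (parallelPair f g) (tensorRight X)] :
    IsColimit (Cofork.ofπ (π ▷ X)
      (show (f ▷ X) ≫ (π ▷ X) = (g ▷ X) ≫ (π ▷ X) by
        rw [← MonoidalCategory.comp_whiskerRight, w, MonoidalCategory.comp_whiskerRight])) :=
  isColimitCoforkMapOfIsColimit (tensorRight X) w t

end Aux

/-- In the category of monoids in a monoidal category `(M, ⊗, I)`, the forgetful functor
to `M` creates reflexive coequalizers: if the tensor product preserves coequalizers of
reflexive pairs in each variable separately, and a reflexive pair of monoid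
homomorphisms has a coequalizer of its underlying pair in `M`, then that coequalizer
carries a (unique) monoid structure making it the coequalizer in the category of
monoids — i.e., the forgetful functor creates the colimit of the pair. -/
theorem stmt8 {M : Type*} [Category M] [MonoidalCategory M]
    (hL : ∀ (X : M) {A B : M} (f g : A ⟶ B), IsReflexivePair f g →
      Nonempty (PreservesColimit (parallelPair f g) (tensorLeft X)))
    (hR : ∀ (X : M) {A B : M} (f g : A ⟶ B), IsReflexivePair f g →
      Nonempty (PreservesColimit (parallelPair f g) (tensorRight X)))
    {A B : Mon M} (f g : A ⟶ B) (hfg : IsReflexivePair f g)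
    (hcoeq : HasCoequalizer f.hom g.hom) :
    Nonempty (CreatesColimit (parallelPair f g) (Mon.forget M)) := by
  classical
  -- the common section on the level of `Mon_ M`
  haveI := hfg
  obtain ⟨σ, hσf, hσg⟩ := IsReflexivePair.common_section f g
  have hσf' : σ.hom ≫ f.hom = 𝟙 B.X := by
    rw [← Mon.comp_hom', hσf, Mon.id_hom']
  have hσg' : σ.hom ≫ g.hom = 𝟙 B.X := by
    rw [← Mon.comp_hom', hσg, Mon.id_hom']
  have hfg' : IsReflexivePair f.hom g.hom := IsReflexivePair.mk' σ.hom hσf' hσg'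
  -- the coequalizer in `M`
  set Q := coequalizer f.hom g.hom with hQ
  set π : B.X ⟶ Q := coequalizer.π f.hom g.hom with hπ
  have w : f.hom ≫ π = g.hom ≫ π := coequalizer.condition _ _
  have t : IsColimit (Cofork.ofπ π w) := coequalizerIsCoequalizer f.hom g.hom
  -- whiskered coequalizers
  have e1 : IsColimit (Cofork.ofπ (B.X ◁ π)
      (show (B.X ◁ f.hom) ≫ (B.X ◁ π) = (B.X ◁ g.hom) ≫ (B.X ◁ π) by
        rw [← MonoidalCategory.whiskerLeft_comp, w, MonoidalCategory.whiskerLeft_comp])) := by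
    haveI := (hL B.X f.hom g.hom hfg').some
    exact stmt8AuxWhiskerLeft t B.X
  have e2 : IsColimit (Cofork.ofπ (π ▷ Q)
      (show (f.hom ▷ Q) ≫ (π ▷ Q) = (g.hom ▷ Q) ≫ (π ▷ Q) by
        rw [← MonoidalCategory.comp_whiskerRight, w, MonoidalCategory.comp_whiskerRight])) := by
    haveI := (hR Q f.hom g.hom hfg').some
    exact stmt8AuxWhiskerRight t Q
  haveI epi1 : Epi (B.X ◁ π) := epi_of_isColimit_cofork e1
  haveI epi2 : Epi (π ▷ Q) := epi_of_isColimit_cofork e2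
  haveI epiππ : Epi (π ⊗ₘ π) := by
    rw [tensorHom_def']
    exact epi_comp _ _
  -- relation for descending the multiplication
  have hmulrel : (f.hom ⊗ₘ f.hom) ≫ (μ[B.X] ≫ π) = (g.hom ⊗ₘ g.hom) ≫ (μ[B.X] ≫ π) := by
    rw [← Category.assoc, ← IsMonHom.mul_hom f.hom, ← Category.assoc (g.hom ⊗ₘ g.hom), ← IsMonHom.mul_hom g.hom,
      Category.assoc, Category.assoc, w]
  have r1 : (B.X ◁ f.hom) ≫ (μ[B.X] ≫ π) = (B.X ◁ g.hom) ≫ (μ[B.X] ≫ π) := by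
    have h1 : (σ.hom ⊗ₘ 𝟙 A.X) ≫ (f.hom ⊗ₘ f.hom) = B.X ◁ f.hom := by
      rw [tensorHom_comp_tensorHom, hσf', Category.id_comp, id_tensorHom]
    have h2 : (σ.hom ⊗ₘ 𝟙 A.X) ≫ (g.hom ⊗ₘ g.hom) = B.X ◁ g.hom := by
      rw [tensorHom_comp_tensorHom, hσg', Category.id_comp, id_tensorHom]
    rw [← h1, ← h2, Category.assoc, Category.assoc, hmulrel]
  set m1 : B.X ⊗ Q ⟶ Q := Cofork.IsColimit.desc e1 (μ[B.X] ≫ π) r1 with hm1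
  have fact1 : (B.X ◁ π) ≫ m1 = μ[B.X] ≫ π := Cofork.IsColimit.π_desc' e1 (μ[B.X] ≫ π) r1
  have r2' : (f.hom ▷ B.X) ≫ (μ[B.X] ≫ π) = (g.hom ▷ B.X) ≫ (μ[B.X] ≫ π) := by
    have h1 : (𝟙 A.X ⊗ₘ σ.hom) ≫ (f.hom ⊗ₘ f.hom) = f.hom ▷ B.X := by
      rw [tensorHom_comp_tensorHom, hσf', Category.id_comp, tensorHom_id]
    have h2 : (𝟙 A.X ⊗ₘ σ.hom) ≫ (g.hom ⊗ₘ g.hom) = g.hom ▷ B.X := by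
      rw [tensorHom_comp_tensorHom, hσg', Category.id_comp, tensorHom_id]
    rw [← h1, ← h2, Category.assoc, Category.assoc, hmulrel]
  have r2 : (f.hom ▷ Q) ≫ m1 = (g.hom ▷ Q) ≫ m1 := by
    haveI epiA : Epi (A.X ◁ π) := by
      haveI := (hL A.X f.hom g.hom hfg').some
      exact epi_of_isColimit_cofork (stmt8AuxWhiskerLeft t A.X)
    rw [← cancel_epi (A.X ◁ π), whisker_exchange_assoc, whisker_exchange_assoc, fact1, r2']
  set mQ : Q ⊗ Q ⟶ Q := Cofork.IsColimit.desc e2 m1 r2 with hmQ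
  have fact2 : (π ▷ Q) ≫ mQ = m1 := Cofork.IsColimit.π_desc' e2 m1 r2
  have key : (π ⊗ₘ π) ≫ mQ = μ[B.X] ≫ π := by
    rw [tensorHom_def', Category.assoc, fact2, fact1]
  set oneQ : 𝟙_ M ⟶ Q := η[B.X] ≫ π with honeQ
  -- epimorphisms needed for the monoid axioms
  haveI epiU1 : Epi ((𝟙_ M) ◁ π) := by
    haveI := (hL (𝟙_ M) f.hom g.hom hfg').some
    exact epi_of_isColimit_cofork (stmt8AuxWhiskerLeft t (𝟙_ M))
  haveI epiU2 : Epi (π ▷ (𝟙_ M)) := by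
    haveI := (hR (𝟙_ M) f.hom g.hom hfg').some
    exact epi_of_isColimit_cofork (stmt8AuxWhiskerRight t (𝟙_ M))
  have hfgR : IsReflexivePair (f.hom ▷ B.X) (g.hom ▷ B.X) := by
    refine IsReflexivePair.mk' (σ.hom ▷ B.X) ?_ ?_ <;>
      rw [← MonoidalCategory.comp_whiskerRight] <;> simp [hσf', hσg']
  have e3 : IsColimit (Cofork.ofπ (π ▷ B.X)
      (show (f.hom ▷ B.X) ≫ (π ▷ B.X) = (g.hom ▷ B.X) ≫ (π ▷ B.X) by
        rw [← MonoidalCategory.comp_whiskerRight, w, MonoidalCategory.comp_whiskerRight])) := by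
    haveI := (hR B.X f.hom g.hom hfg').some
    exact stmt8AuxWhiskerRight t B.X
  haveI epi4 : Epi (B.X ◁ (π ▷ B.X)) := by
    haveI := (hL B.X (f.hom ▷ B.X) (g.hom ▷ B.X) hfgR).some
    exact epi_of_isColimit_cofork (stmt8AuxWhiskerLeft e3 B.X)
  haveI epi5 : Epi (π ▷ (Q ⊗ B.X)) := by
    haveI := (hR (Q ⊗ B.X) f.hom g.hom hfg').some
    exact epi_of_isColimit_cofork (stmt8AuxWhiskerRight t (Q ⊗ B.X))
  haveI epi6 : Epi ((Q ⊗ Q) ◁ π) := by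
    haveI := (hL (Q ⊗ Q) f.hom g.hom hfg').some
    exact epi_of_isColimit_cofork (stmt8AuxWhiskerLeft t (Q ⊗ Q))
  haveI epi7 : Epi ((π ▷ Q) ▷ B.X) := by
    have h : (π ▷ Q) ▷ B.X
        = (α_ B.X Q B.X).hom ≫ π ▷ (Q ⊗ B.X) ≫ (α_ Q Q B.X).inv := by
      rw [whiskerRight_tensor]; simp
    rw [h]; infer_instance
  haveI epi8 : Epi ((B.X ◁ π) ▷ B.X) := by
    rw [whisker_assoc]; infer_instance
  haveI epiE : Epi ((π ⊗ₘ π) ⊗ₘ π) := by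
    rw [tensorHom_def (π ⊗ₘ π) π, tensorHom_def' π π, MonoidalCategory.comp_whiskerRight]
    infer_instance
  -- the monoid structure on Q
  have one_mulQ : (oneQ ▷ Q) ≫ mQ = (λ_ Q).hom := by
    rw [← cancel_epi ((𝟙_ M) ◁ π)]
    calc (𝟙_ M ◁ π) ≫ (oneQ ▷ Q) ≫ mQ
        = ((𝟙_ M ◁ π) ≫ (oneQ ▷ Q)) ≫ mQ := by rw [Category.assoc]
      _ = (oneQ ⊗ₘ π) ≫ mQ := by rw [← tensorHom_def']
      _ = (η[B.X] ⊗ₘ 𝟙 B.X) ≫ (π ⊗ₘ π) ≫ mQ := by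
            rw [tensorHom_comp_tensorHom_assoc, Category.id_comp]
      _ = (η[B.X] ⊗ₘ 𝟙 B.X) ≫ (μ[B.X] ≫ π) := by rw [key]
      _ = (λ_ B.X).hom ≫ π := by
            rw [← Category.assoc, tensorHom_id, MonObj.one_mul]
      _ = (𝟙_ M ◁ π) ≫ (λ_ Q).hom := by rw [leftUnitor_naturality]
  have mul_oneQ : (Q ◁ oneQ) ≫ mQ = (ρ_ Q).hom := by
    rw [← cancel_epi (π ▷ (𝟙_ M))]
    calc (π ▷ 𝟙_ M) ≫ (Q ◁ oneQ) ≫ mQ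
        = ((π ▷ 𝟙_ M) ≫ (Q ◁ oneQ)) ≫ mQ := by rw [Category.assoc]
      _ = (π ⊗ₘ oneQ) ≫ mQ := by rw [← MonoidalCategory.tensorHom_def]
      _ = (𝟙 B.X ⊗ₘ η[B.X]) ≫ (π ⊗ₘ π) ≫ mQ := by
            rw [tensorHom_comp_tensorHom_assoc, Category.id_comp]
      _ = (𝟙 B.X ⊗ₘ η[B.X]) ≫ (μ[B.X] ≫ π) := by rw [key]
      _ = (ρ_ B.X).hom ≫ π := by
            rw [← Category.assoc, id_tensorHom, MonObj.mul_one]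
      _ = (π ▷ 𝟙_ M) ≫ (ρ_ Q).hom := by rw [rightUnitor_naturality]
  have aux : (π ⊗ₘ (π ⊗ₘ π)) ≫ (Q ◁ mQ) = π ⊗ₘ (μ[B.X] ≫ π) := by
    rw [← id_tensorHom, tensorHom_comp_tensorHom, Category.comp_id, key]
  have aux2 : π ⊗ₘ (μ[B.X] ≫ π) = (B.X ◁ μ[B.X]) ≫ (π ⊗ₘ π) := by
    rw [← id_tensorHom, tensorHom_comp_tensorHom, Category.id_comp]
  have aux3 : ((π ⊗ₘ π) ⊗ₘ π) ≫ (mQ ▷ Q) = (μ[B.X] ≫ π) ⊗ₘ π := by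
    rw [← tensorHom_id, tensorHom_comp_tensorHom, Category.comp_id, key]
  have aux4 : (μ[B.X] ≫ π) ⊗ₘ π = (μ[B.X] ▷ B.X) ≫ (π ⊗ₘ π) := by
    rw [← tensorHom_id, tensorHom_comp_tensorHom, Category.id_comp]
  have lhs_eq : ((π ⊗ₘ π) ⊗ₘ π) ≫ (mQ ▷ Q) ≫ mQ = (μ[B.X] ▷ B.X) ≫ μ[B.X] ≫ π := by
    rw [← Category.assoc, aux3, aux4, Category.assoc, key]
  have rhs_eq : ((π ⊗ₘ π) ⊗ₘ π) ≫ (α_ Q Q Q).hom ≫ (Q ◁ mQ) ≫ mQ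
      = (α_ B.X B.X B.X).hom ≫ (B.X ◁ μ[B.X]) ≫ μ[B.X] ≫ π := by
    calc ((π ⊗ₘ π) ⊗ₘ π) ≫ (α_ Q Q Q).hom ≫ (Q ◁ mQ) ≫ mQ
        = (α_ B.X B.X B.X).hom ≫ (π ⊗ₘ (π ⊗ₘ π)) ≫ (Q ◁ mQ) ≫ mQ := by
          rw [← Category.assoc, associator_naturality, Category.assoc]
      _ = (α_ B.X B.X B.X).hom ≫ ((π ⊗ₘ (π ⊗ₘ π)) ≫ (Q ◁ mQ)) ≫ mQ := by
          rw [Category.assoc]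
      _ = (α_ B.X B.X B.X).hom ≫ ((B.X ◁ μ[B.X]) ≫ (π ⊗ₘ π)) ≫ mQ := by
          rw [aux, aux2]
      _ = (α_ B.X B.X B.X).hom ≫ (B.X ◁ μ[B.X]) ≫ μ[B.X] ≫ π := by
          simp only [Category.assoc, key]
  have mul_assocQ : (mQ ▷ Q) ≫ mQ = (α_ Q Q Q).hom ≫ (Q ◁ mQ) ≫ mQ := by
    rw [← cancel_epi ((π ⊗ₘ π) ⊗ₘ π), lhs_eq, rhs_eq, MonObj.mul_assoc_assoc]
  let Qmon : Mon M :=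
    { X := Q
      mon :=
      { one := oneQ
        mul := mQ
        one_mul := one_mulQ
        mul_one := mul_oneQ
        mul_assoc := mul_assocQ } }
  let πmon : B ⟶ Qmon := { hom := π, isMonHom_hom := @IsMonHom.mk M _ _ B.X Qmon.X _ Qmon.mon π rfl key.symm }
  have wmon : f ≫ πmon = g ≫ πmon := by
    apply Mon.Hom.ext
    simpa using w
  have descfact : ∀ s : Cofork f g, f.hom ≫ (Cofork.π s).hom = g.hom ≫ (Cofork.π s).hom := by
    intro s
    have := congrArg Mon.Hom.hom s.condition
    simpa using this
  have πd : ∀ s : Cofork f g,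
      π ≫ Cofork.IsColimit.desc t (Cofork.π s).hom (descfact s) = (Cofork.π s).hom :=
    fun s => Cofork.IsColimit.π_desc' t _ _
  have makes : IsColimit (Cofork.ofπ πmon wmon) := by
    refine Cofork.IsColimit.mk _ (fun s => ?_) (fun s => ?_) (fun s m hm => ?_)
    · exact
        { hom := Cofork.IsColimit.desc t (Cofork.π s).hom (descfact s)
          isMonHom_hom :=
          { one_hom := by
              show (η[B.X] ≫ π) ≫ _ = _
              rw [Category.assoc, πd s, IsMonHom.one_hom]
            mul_hom := by
              show mQ ≫ _ = _
              rw [← cancel_epi (π ⊗ₘ π), reassoc_of% key, πd s, IsMonHom.mul_hom,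
                tensorHom_comp_tensorHom_assoc, πd s] }
        }
    · apply Mon.Hom.ext
      simpa using πd s
    · apply Mon.Hom.ext
      refine Cofork.IsColimit.hom_ext t ?_
      have h2 := congrArg Mon.Hom.hom hm
      simp only [Mon.comp_hom'] at h2
      simpa using h2.trans (πd s).symm
  have hc : IsColimit ((Mon.forget M).mapCocone (Cofork.ofπ πmon wmon)) :=
    (isColimitMapCoconeCoforkEquiv (Mon.forget M) wmon).symm t
  exact ⟨createsColimitOfReflectsIso' hc ⟨⟨Cofork.ofπ πmon wmon, Iso.refl _⟩, makes⟩⟩
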